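/- arXiv:2604.19490 — 3 statements merged into one kernel-verified Lean document; each statement's English description precedes it below -/
import Mathlib

section
/- The number of quadruples (a1,a2,a3,a4) of nonnegative integers satisfying 0 ≤ a1 ≤ m2, 0 ≤ a2 ≤ m1 + 2·a1, 0 ≤ a3 ≤ min(⌊(a2+m1)/2⌋, a2), and 0 ≤ a4 ≤ min(m1, a3) equals (1/6)·(m1+1)·(m2+1)·(m1+m2+2)·(m1+2·m2+3), the Weyl dimension of the irreducible sp4-module with highest weight m1·ω1 + m2·ω2. -/
open Finset


lemma sum_ite_le' {N t : ℕ} (g : ℕ → ℕ) (h : t ≤ N) :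
    ∑ i ∈ range (N+1), (if i ≤ t then g i else 0) = ∑ i ∈ range (t+1), g i := by
  rw [← Finset.sum_filter]
  apply Finset.sum_congr _ (fun _ _ => rfl)
  ext x
  simp only [mem_filter, mem_range]
  omega

lemma card_eq_sum (m1 m2 : ℕ) :
    Nat.card {a : ℕ × ℕ × ℕ × ℕ //
        a.1 ≤ m2 ∧
        a.2.1 ≤ m1 + 2 * a.1 ∧
        a.2.2.1 ≤ min ((a.2.1 + m1) / 2) a.2.1 ∧
        a.2.2.2 ≤ min m1 a.2.2.1} =
      ∑ a1 ∈ range (m2+1), ∑ a2 ∈ range (m1+2*a1+1),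
        ∑ a3 ∈ range (min ((a2+m1)/2) a2 + 1), (min m1 a3 + 1) := by
  classical
  set P : ℕ × ℕ × ℕ × ℕ → Prop := fun a =>
    a.1 ≤ m2 ∧ a.2.1 ≤ m1 + 2 * a.1 ∧
    a.2.2.1 ≤ min ((a.2.1 + m1) / 2) a.2.1 ∧ a.2.2.2 ≤ min m1 a.2.2.1 with hP
  set M := m1 + 2 * m2 with hM
  set s : Finset (ℕ × ℕ × ℕ × ℕ) :=
    (range (m2+1) ×ˢ range (M+1) ×ˢ range (M+1) ×ˢ range (m1+1)).filter P with hs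
  have h1 : {a : ℕ × ℕ × ℕ × ℕ | P a} = ↑s := by
    ext ⟨a1, a2, a3, a4⟩
    simp only [hs, Set.mem_setOf_eq, coe_filter, mem_product, mem_range, hP, Set.mem_setOf_eq]
    omega
  have h2 : Nat.card {a : ℕ × ℕ × ℕ × ℕ // P a} = s.card := by
    have := Nat.card_coe_set_eq (s := (↑s : Set (ℕ × ℕ × ℕ × ℕ)))
    rw [Set.ncard_coe_finset] at this
    rw [← this, ← h1]
    rfl
  rw [h2, card_filter]
  simp only [hP, Finset.sum_product, ite_and, Finset.sum_ite_irrel, Finset.sum_const_zero]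
  refine Finset.sum_congr rfl fun a1 ha1 => ?_
  have ha1' : a1 ≤ m2 := by simpa [Nat.lt_succ_iff] using ha1
  rw [if_pos ha1', sum_ite_le' _ (by omega)]
  refine Finset.sum_congr rfl fun a2 ha2 => ?_
  have ha2' : a2 ≤ m1 + 2*a1 := by simpa [Nat.lt_succ_iff] using ha2
  rw [sum_ite_le' _ (by omega)]
  refine Finset.sum_congr rfl fun a3 ha3 => ?_
  rw [sum_ite_le' _ (by omega)]
  simp


lemma tri_sum (n : ℕ) : 2 * ∑ i ∈ range (n+1), (i+1) = (n+1)*(n+2) := by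
  induction n with
  | zero => simp
  | succ n ih => rw [Finset.sum_range_succ, Nat.mul_add, ih]; ring

lemma cube_sum (n : ℕ) :
    6 * ∑ a2 ∈ range (n+1), ∑ a3 ∈ range (a2+1), (a3+1) = (n+1)*(n+2)*(n+3) := by
  induction n with
  | zero => simp
  | succ n ih =>
    rw [Finset.sum_range_succ, Nat.mul_add, ih,
      show 6 * ∑ a3 ∈ range (n+1+1), (a3+1) = 3 * (2 * ∑ a3 ∈ range (n+1+1), (a3+1)) by ring,
      tri_sum]
    ring

lemma split_sum (m1 d : ℕ) :
    ∑ a3 ∈ range (m1+d+1), (min m1 a3 + 1) =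
      (∑ a3 ∈ range (m1+1), (a3+1)) + d*(m1+1) := by
  induction d with
  | zero =>
    simp only [Nat.add_zero, Nat.zero_mul]
    exact Finset.sum_congr rfl fun a3 h3 => by
      have := mem_range.mp h3; omega
  | succ d ih =>
    rw [show m1+(d+1)+1 = (m1+d+1)+1 by ring, Finset.sum_range_succ, ih,
      show min m1 (m1+d+1) = m1 by omega]
    ring

lemma inner_small (m1 a2 : ℕ) (h : a2 ≤ m1) :
    ∑ a3 ∈ range (min ((a2+m1)/2) a2 + 1), (min m1 a3 + 1) =
      ∑ a3 ∈ range (a2+1), (a3+1) := by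
  rw [show min ((a2+m1)/2) a2 = a2 by omega]
  exact Finset.sum_congr rfl fun a3 h3 => by
    have := mem_range.mp h3; omega

lemma level2_sum (m1 k : ℕ) :
    6 * ∑ a2 ∈ range (m1+2*k+1), ∑ a3 ∈ range (min ((a2+m1)/2) a2 + 1), (min m1 a3 + 1) =
      (m1+1)*(m1+2)*(m1+3) + 6*k*(m1+1)*(m1+2) + 6*k*k*(m1+1) := by
  induction k with
  | zero =>
    simp only [Nat.mul_zero, Nat.add_zero, Nat.zero_mul]
    rw [Finset.sum_congr rfl fun a2 h2 => inner_small m1 a2 (by have := mem_range.mp h2; omega)]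
    exact cube_sum m1
  | succ k ih =>
    rw [show m1+2*(k+1)+1 = ((m1+2*k+1)+1)+1 by ring, Finset.sum_range_succ,
      Finset.sum_range_succ,
      show min ((m1+2*k+1+m1)/2) (m1+2*k+1) = m1 + k by omega,
      show min ((m1+2*k+1+1+m1)/2) (m1+2*k+1+1) = m1 + (k+1) by omega,
      split_sum m1 k, split_sum m1 (k+1)]
    have hT := tri_sum m1
    set T := ∑ a3 ∈ range (m1+1), (a3+1) with hTdef
    set A := ∑ a2 ∈ range (m1+2*k+1), ∑ a3 ∈ range (min ((a2+m1)/2) a2 + 1), (min m1 a3 + 1)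
      with hAdef
    zify at ih hT ⊢
    linear_combination ih + 6*hT

lemma final_sum (m1 m2 : ℕ) :
    ∑ a1 ∈ range (m2+1),
        ((m1+1)*(m1+2)*(m1+3) + 6*a1*(m1+1)*(m1+2) + 6*a1*a1*(m1+1)) =
      (m1+1)*(m2+1)*(m1+m2+2)*(m1+2*m2+3) := by
  induction m2 with
  | zero => simp
  | succ m2 ih => rw [Finset.sum_range_succ, ih]; ring

/-- The number of quadruples `(a1,a2,a3,a4)` of nonnegative integers satisfying the
Verma-basis inequalities for `sp₄` equals the Weyl dimension
`(1/6)(m1+1)(m2+1)(m1+m2+2)(m1+2m2+3)` of `L(m1·ω1 + m2·ω2)`. -/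
theorem verma_count_eq_weyl_dim (m1 m2 : ℕ) :
    6 * Nat.card {a : ℕ × ℕ × ℕ × ℕ //
        a.1 ≤ m2 ∧
        a.2.1 ≤ m1 + 2 * a.1 ∧
        a.2.2.1 ≤ min ((a.2.1 + m1) / 2) a.2.1 ∧
        a.2.2.2 ≤ min m1 a.2.2.1} =
      (m1 + 1) * (m2 + 1) * (m1 + m2 + 2) * (m1 + 2 * m2 + 3) := by
  rw [card_eq_sum, Finset.mul_sum]
  rw [Finset.sum_congr rfl fun a1 _ => level2_sum m1 a1]
  exact final_sum m1 m2
end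

section
/- Let T be a Kashiwara–Nakashima tableau of sp4 of shape (m1+m2, m2) and set a1 = #{entries > 2 in row 2}, a2 = #{entries > 1 in row 1} + #{entries > 2̄ in row 2}, a3 = #{entries > 2 in row 1}, a4 = #{entries > 2̄ in row 1}. Then these satisfy 0 ≤ a1 ≤ m2, 0 ≤ a2 ≤ m1 + 2a1, 0 ≤ a3 ≤ min(⌊(a2+m1)/2⌋, a2), and 0 ≤ a4 ≤ min(m1, a3). -/
open Finset

private lemma count_split {m1 m2 : ℕ} (P : Fin (m1 + m2) → Prop) [DecidablePred P]
    (Q : Fin m2 → Prop) [DecidablePred Q]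
    (h : ∀ (j : Fin (m1 + m2)) (hj : j.val < m2), P j → Q ⟨j.val, hj⟩) :
    (Finset.univ.filter P).card ≤ (Finset.univ.filter Q).card + m1 := by
  classical
  have hsub : Finset.univ.filter P ⊆
      (Finset.univ.filter fun j : Fin (m1 + m2) => P j ∧ j.val < m2) ∪
      (Finset.univ.filter fun j : Fin (m1 + m2) => m2 ≤ j.val) := by
    intro j hj
    simp only [mem_filter, mem_union, mem_univ, true_and] at *
    rcases lt_or_ge j.val m2 with h' | h'
    · exact Or.inl ⟨hj, h'⟩
    · exact Or.inr h'
  have h1 : (Finset.univ.filter fun j : Fin (m1 + m2) => P j ∧ j.val < m2).card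
      ≤ (Finset.univ.filter Q).card := by
    rw [← Finset.card_image_of_injective (Finset.univ.filter Q) Fin.val_injective]
    apply Finset.card_le_card_of_injOn (fun j => j.val)
    · intro j hj
      simp only [mem_coe, mem_filter, mem_univ, true_and] at hj
      simp only [mem_coe, mem_image, mem_filter, mem_univ, true_and]
      exact ⟨⟨j.val, hj.2⟩, h j hj.2 hj.1, rfl⟩
    · intro x _ y _ hxy
      exact Fin.val_injective hxy
  have h2 : (Finset.univ.filter fun j : Fin (m1 + m2) => m2 ≤ j.val).card ≤ m1 := by
    have := Finset.card_le_card_of_injOn (fun j : Fin (m1 + m2) => j.val - m2)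
      (s := Finset.univ.filter fun j : Fin (m1 + m2) => m2 ≤ j.val)
      (t := Finset.range m1)
      (by
        intro j hj
        simp only [mem_coe, mem_filter, mem_univ, true_and] at hj
        have := j.isLt
        show j.val - m2 ∈ Finset.range m1
        rw [mem_range]
        omega)
      (by
        intro x hx y hy hxy
        simp only [coe_filter, mem_univ, true_and, Set.mem_setOf_eq] at hx hy
        have hxy' : x.val - m2 = y.val - m2 := hxy
        exact Fin.ext (by omega))
    simpa using this
  calc (Finset.univ.filter P).card
      ≤ ((Finset.univ.filter fun j : Fin (m1 + m2) => P j ∧ j.val < m2) ∪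
        (Finset.univ.filter fun j : Fin (m1 + m2) => m2 ≤ j.val)).card :=
        Finset.card_le_card hsub
    _ ≤ (Finset.univ.filter fun j : Fin (m1 + m2) => P j ∧ j.val < m2).card +
        (Finset.univ.filter fun j : Fin (m1 + m2) => m2 ≤ j.val).card :=
        Finset.card_union_le _ _
    _ ≤ (Finset.univ.filter Q).card + m1 := Nat.add_le_add h1 h2

private lemma count_lift {n m2 : ℕ} (le : m2 ≤ n) (P : Fin n → Prop) [DecidablePred P]
    (Q : Fin m2 → Prop) [DecidablePred Q]
    (h : ∀ j : Fin m2, Q j → P (Fin.castLE le j)) :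
    (Finset.univ.filter Q).card ≤ (Finset.univ.filter P).card := by
  apply Finset.card_le_card_of_injOn (Fin.castLE le)
  · intro j hj
    simp only [mem_coe, mem_filter, mem_univ, true_and] at *
    exact h j hj
  · intro x _ y _ hxy
    exact Fin.castLE_injective le hxy

/-- A Kashiwara–Nakashima tableau of `sp₄` of two-row shape `(l1, l2)`.
Entries lie in `Fin 4`, encoding the alphabet `1 < 2 < 2̄ < 1̄` as `0 < 1 < 2 < 3`.
`r1 j` is the entry of row 1 in column `j`, `r2 j` the entry of row 2 in column `j`. -/
structure KNTableau (l1 l2 : ℕ) where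
  le : l2 ≤ l1
  r1 : Fin l1 → Fin 4
  r2 : Fin l2 → Fin 4
  row1_mono : Monotone r1
  row2_mono : Monotone r2
  col_strict : ∀ j : Fin l2, r1 (Fin.castLE le j) < r2 j
  no_one_onebar : ∀ j : Fin l2, ¬(r1 (Fin.castLE le j) = 0 ∧ r2 j = 3)
  forbidden1 : ∀ (j : ℕ) (h : j + 1 < l2),
    ¬(r1 (Fin.castLE le ⟨j, Nat.lt_of_succ_lt h⟩) = 1 ∧
      r1 (Fin.castLE le ⟨j + 1, h⟩) = 1 ∧ r2 ⟨j + 1, h⟩ = 2)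
  forbidden2 : ∀ (j : ℕ) (hj : j < l2) (h : j + 1 < l1),
    ¬(r1 (Fin.castLE le ⟨j, hj⟩) = 1 ∧ r2 ⟨j, hj⟩ = 2 ∧ r1 ⟨j + 1, h⟩ = 2)


/-- For any KN tableau of `sp₄` of shape `(m1+m2, m2)`, the statistics
`a1 = #{row-2 entries > 2}`, `a2 = #{row-1 entries > 1} + #{row-2 entries > 2̄}`,
`a3 = #{row-1 entries > 2}`, `a4 = #{row-1 entries > 2̄}` satisfy the
Verma-basis inequalities. -/
theorem kn_statistics_satisfy_inequalities (m1 m2 : ℕ)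
    (T : KNTableau (m1 + m2) m2) :
    let a1 := (Finset.univ.filter fun j : Fin m2 => 1 < T.r2 j).card
    let a2 := (Finset.univ.filter fun j : Fin (m1 + m2) => 0 < T.r1 j).card
        + (Finset.univ.filter fun j : Fin m2 => 2 < T.r2 j).card
    let a3 := (Finset.univ.filter fun j : Fin (m1 + m2) => 1 < T.r1 j).card
    let a4 := (Finset.univ.filter fun j : Fin (m1 + m2) => 2 < T.r1 j).card
    a1 ≤ m2 ∧ a2 ≤ m1 + 2 * a1 ∧ a3 ≤ min ((a2 + m1) / 2) a2 ∧
      a4 ≤ min m1 a3 := by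
  intro a1 a2 a3 a4
  -- abbreviations
  set b := (Finset.univ.filter fun j : Fin (m1 + m2) => 0 < T.r1 j).card with hb_def
  set c := (Finset.univ.filter fun j : Fin m2 => 2 < T.r2 j).card with hc_def
  -- a1 ≤ m2
  have h1 : a1 ≤ m2 := by
    have := Finset.card_filter_le (Finset.univ : Finset (Fin m2))
      (fun j => 1 < T.r2 j)
    simpa using this
  -- c ≤ a1
  have hc : c ≤ a1 := by
    apply Finset.card_le_card
    intro j hj
    simp only [mem_filter, mem_univ, true_and] at *
    exact lt_trans (by decide) hj
  -- #{r2 ≤ 1} ≤ #{r1 = 0}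
  have hA : (Finset.univ.filter fun j : Fin m2 => ¬ 1 < T.r2 j).card ≤
      (Finset.univ.filter fun j : Fin (m1 + m2) => ¬ 0 < T.r1 j).card := by
    apply count_lift T.le
    intro j hj
    have hcs := T.col_strict j
    rw [Fin.lt_def] at hcs ⊢
    rw [Fin.lt_def] at hj
    simp only [Fin.val_zero] at *
    omega
  have e1 : b + (Finset.univ.filter fun j : Fin (m1 + m2) => ¬ 0 < T.r1 j).card
      = m1 + m2 := by
    rw [hb_def, Finset.card_filter_add_card_filter_not]
    simp
  have e2 : a1 + (Finset.univ.filter fun j : Fin m2 => ¬ 1 < T.r2 j).card = m2 := by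
    rw [Finset.card_filter_add_card_filter_not]
    simp
  have hb : b ≤ m1 + a1 := by omega
  have h2 : a2 ≤ m1 + 2 * a1 := by
    have : a2 = b + c := rfl
    omega
  -- a3 ≤ b
  have h3b : a3 ≤ b := by
    apply Finset.card_le_card
    intro j hj
    simp only [mem_filter, mem_univ, true_and] at *
    exact lt_trans (by decide) hj
  -- a3 ≤ m1 + c
  have h3c : a3 ≤ c + m1 := by
    apply count_split
    intro j hj hPj
    have hcs := T.col_strict ⟨j.val, hj⟩
    have hcast : Fin.castLE T.le ⟨j.val, hj⟩ = j := Fin.ext rfl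
    rw [hcast] at hcs
    rw [Fin.lt_def] at hcs hPj ⊢
    have h4 := (T.r2 ⟨j.val, hj⟩).isLt
    simp only [Fin.val_one, Fin.val_two] at *
    omega
  have h3 : a3 ≤ min ((a2 + m1) / 2) a2 := by
    apply le_min
    · rw [Nat.le_div_iff_mul_le (by norm_num)]
      have : a2 = b + c := rfl
      omega
    · have : a2 = b + c := rfl
      omega
  -- a4 ≤ a3
  have h4a : a4 ≤ a3 := by
    apply Finset.card_le_card
    intro j hj
    simp only [mem_filter, mem_univ, true_and] at *
    exact lt_trans (by decide) hj
  -- a4 ≤ m1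
  have h4m : a4 ≤ m1 := by
    have := count_split (m1 := m1) (m2 := m2)
      (fun j => 2 < T.r1 j) (fun _ => False) ?_
    · simpa using this
    · intro j hj hPj
      have hcs := T.col_strict ⟨j.val, hj⟩
      have hcast : Fin.castLE T.le ⟨j.val, hj⟩ = j := Fin.ext rfl
      rw [hcast] at hcs
      rw [Fin.lt_def] at hcs hPj
      have h4 := (T.r2 ⟨j.val, hj⟩).isLt
      simp only [Fin.val_two] at *
      omega
  exact ⟨h1, h2, h3, le_min h4m h4a⟩
end

section
/- Let T be a KN tableau of sp4 of shape (m1+m2, m2) with k_i entries equal to i and k_{ī} entries equal to ī (i = 1,2), and let (a1,a2,a3,a4) be its associated statistics (a1 = #{row-2 entries > 2}, a2 = #{row-1 entries > 1} + #{row-2 entries > 2̄}, a3 = #{row-1 entries > 2}, a4 = #{row-1 entries > 2̄}). Then the weight wt(T) = (k_1 − k_{1̄})·ε1 + (k_2 − k_{2̄})·ε2 equals (m1+m2−a2−a4)·ε1 + (m2−2a1+a2−2a3+a4)·ε2. -/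
lemma row_counts {N : ℕ} (f : Fin N → Fin 4) :
    (Finset.univ.filter fun j => f j = 0).card + (Finset.univ.filter fun j => 0 < f j).card = N ∧
    (Finset.univ.filter fun j => 0 < f j).card =
      (Finset.univ.filter fun j => f j = 1).card + (Finset.univ.filter fun j => 1 < f j).card ∧
    (Finset.univ.filter fun j => 1 < f j).card =
      (Finset.univ.filter fun j => f j = 2).card + (Finset.univ.filter fun j => f j = 3).card ∧
    (Finset.univ.filter fun j => 2 < f j).card = (Finset.univ.filter fun j => f j = 3).card := by
  have hval : ∀ j, (f j).val < 4 := fun j => (f j).isLt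
  refine ⟨?_, ?_, ?_, ?_⟩
  · have h : (Finset.univ.filter fun j => f j = 0) = (Finset.univ.filter fun j => ¬ 0 < f j) := by
      apply Finset.filter_congr
      intro j _
      have := hval j
      simp only [Fin.ext_iff, Fin.lt_def, Fin.val_zero, not_lt]
      try omega
    rw [h]
    rw [Finset.filter_not, Finset.card_univ_diff]
    have hle := Finset.card_filter_le (Finset.univ : Finset (Fin N)) (fun j => 0 < f j)
    simp [Finset.card_univ] at hle ⊢
    omega
  · have h : (Finset.univ.filter fun j => 0 < f j) =
        (Finset.univ.filter fun j => f j = 1) ∪ (Finset.univ.filter fun j => 1 < f j) := by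
      rw [← Finset.filter_or]
      apply Finset.filter_congr
      intro j _
      have := hval j
      simp only [Fin.ext_iff, Fin.lt_def, Fin.val_zero, Fin.val_one]
      try omega
    rw [h, Finset.card_union_of_disjoint]
    rw [Finset.disjoint_filter]
    intro j _ h1 h2
    rw [h1] at h2
    exact lt_irrefl _ h2
  · have h : (Finset.univ.filter fun j => 1 < f j) =
        (Finset.univ.filter fun j => f j = 2) ∪ (Finset.univ.filter fun j => f j = 3) := by
      rw [← Finset.filter_or]
      apply Finset.filter_congr
      intro j _
      have := hval j
      simp [Fin.ext_iff, Fin.lt_def]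
      try omega
    rw [h, Finset.card_union_of_disjoint]
    rw [Finset.disjoint_filter]
    intro j _ h1 h2
    rw [h1] at h2
    exact absurd h2 (by decide)
  · apply congrArg
    apply Finset.filter_congr
    intro j _
    have := hval j
    simp [Fin.ext_iff, Fin.lt_def]
    try omega

/-- The weight `wt(T) = (k₁ − k₁̄)·ε1 + (k₂ − k₂̄)·ε2` of a KN tableau of `sp₄` of
shape `(m1+m2, m2)` equals `(m1+m2−a2−a4)·ε1 + (m2−2a1+a2−2a3+a4)·ε2`, where
`(a1,a2,a3,a4)` are the associated statistics and weights are written as pairs of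
integer coordinates with respect to `ε1, ε2`. -/
theorem kn_weight_eq (m1 m2 : ℕ) (T : KNTableau (m1 + m2) m2) :
    let k : Fin 4 → ℕ := fun e =>
      (Finset.univ.filter fun j : Fin (m1 + m2) => T.r1 j = e).card
        + (Finset.univ.filter fun j : Fin m2 => T.r2 j = e).card
    let a1 := (Finset.univ.filter fun j : Fin m2 => 1 < T.r2 j).card
    let a2 := (Finset.univ.filter fun j : Fin (m1 + m2) => 0 < T.r1 j).card
        + (Finset.univ.filter fun j : Fin m2 => 2 < T.r2 j).card
    let a3 := (Finset.univ.filter fun j : Fin (m1 + m2) => 1 < T.r1 j).card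
    let a4 := (Finset.univ.filter fun j : Fin (m1 + m2) => 2 < T.r1 j).card
    (((k 0 : ℤ) - k 3, (k 1 : ℤ) - k 2) : ℤ × ℤ) =
      ((m1 : ℤ) + m2 - a2 - a4, (m2 : ℤ) - 2 * a1 + a2 - 2 * a3 + a4) := by
  intro k a1 a2 a3 a4
  have hpos : ∀ j : Fin m2, 0 < T.r2 j :=
    fun j => lt_of_le_of_lt (Fin.zero_le _) (T.col_strict j)
  obtain ⟨h10, h11, h12, h13⟩ := row_counts T.r1
  obtain ⟨h20, h21, h22, h23⟩ := row_counts T.r2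
  have hz : (Finset.univ.filter fun j : Fin m2 => T.r2 j = 0).card = 0 := by
    rw [Finset.card_eq_zero, Finset.filter_eq_empty_iff]
    intro j _ h
    exact absurd (hpos j) (by rw [h]; exact lt_irrefl _)
  simp only [k, a1, a2, a3, a4, Prod.mk.injEq]
  constructor <;> push_cast <;> omega
end
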